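/- arXiv:2512.21417 — 3 statements merged into one kernel-verified Lean document; each statement's English description precedes it below -/
import Mathlib

section
/- Let X be a random vector in ℝ² satisfying the Carleman condition. If the set 𝒰 = {u ∈ S¹ : X =_d R_u X} of directions of axial symmetry of X is infinite, then the distribution of X is spherically symmetric. -/
open MeasureTheory
open scoped RealInnerProductSpace

/-- The reflection `R_u x = 2 ⟪u, x⟫ u - x` across the line spanned by the unit vector `u`. -/
noncomputable def reflMap {d : ℕ} (u : EuclideanSpace ℝ (Fin d)) (x : EuclideanSpace ℝ (Fin d)) :
    EuclideanSpace ℝ (Fin d) :=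
  (2 * ⟪u, x⟫) • u - x

/-- Carleman condition for a random vector. -/
def Carleman {d : ℕ} {Ω : Type*} [MeasurableSpace Ω] (μ : Measure Ω)
    (X : Ω → EuclideanSpace ℝ (Fin d)) : Prop :=
  (∀ k : ℕ, Integrable (fun ω => ‖X ω‖ ^ k) μ) ∧
    ¬ Summable (fun k : ℕ => (∫ ω, ‖X ω‖ ^ (k + 1) ∂μ) ^ (-1 / ((k : ℝ) + 1)))

/-- Spherical symmetry: `Q X =_d X` for every orthogonal transformation `Q`. -/
def SphericallySymmetric {d : ℕ} {Ω : Type*} [MeasurableSpace Ω] (μ : Measure Ω)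
    (X : Ω → EuclideanSpace ℝ (Fin d)) : Prop :=
  ∀ Q : EuclideanSpace ℝ (Fin d) ≃ₗᵢ[ℝ] EuclideanSpace ℝ (Fin d),
    Measure.map (fun ω => Q (X ω)) μ = Measure.map X μ

open Complex Filter Topology

/-- Composition of two distribution symmetries is a symmetry. -/
lemma inv_comp {ν : Measure ℂ} {g h : ℂ → ℂ} (hg : Measurable g) (hh : Measurable h)
    (Hg : Measure.map g ν = ν) (Hh : Measure.map h ν = ν) :
    Measure.map (fun z => g (h z)) ν = ν := by
  have : Measure.map (g ∘ h) ν = ν := by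
    rw [← Measure.map_map hg hh, Hh, Hg]
  simpa [Function.comp_def] using this

/-- A pointwise limit of multiplicative symmetries is a symmetry. -/
lemma inv_limit {ν : Measure ℂ} [IsProbabilityMeasure ν] {a : ℕ → ℂ} {b : ℂ}
    (hab : Filter.Tendsto a atTop (nhds b))
    (H : ∀ n, Measure.map (fun z => a n * z) ν = ν) :
    Measure.map (fun z => b * z) ν = ν := by
  have mb : Measurable fun z : ℂ => b * z := (measurable_id.const_mul b)
  refine ext_of_forall_lintegral_eq_of_IsFiniteMeasure (fun f => ?_)
  have hfm : Measurable fun z : ℂ => (f z : ENNReal) := f.measurable_coe_ennreal_comp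
  rw [lintegral_map hfm mb]
  have key : Filter.Tendsto (fun n => ∫⁻ z, (f (a n * z) : ENNReal) ∂ν) atTop
      (nhds (∫⁻ z, (f (b * z) : ENNReal) ∂ν)) := by
    apply tendsto_lintegral_of_dominated_convergence (fun _ => ((nndist 0 f : NNReal) : ENNReal))
    · exact fun n => hfm.comp (measurable_const_mul _)
    · intro n
      filter_upwards with z
      exact ENNReal.coe_le_coe.mpr (f.apply_le_nndist_zero _)
    · rw [lintegral_const]
      exact ENNReal.mul_ne_top ENNReal.coe_ne_top (measure_ne_top ν _)
    · filter_upwards with z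
      exact ENNReal.tendsto_coe.2 <| (f.continuous.tendsto _).comp (hab.mul_const z)
  have const : ∀ n, ∫⁻ z, (f (a n * z) : ENNReal) ∂ν = ∫⁻ z, (f z : ENNReal) ∂ν := by
    intro n
    rw [← lintegral_map hfm (measurable_const_mul _), H n]
  simp_rw [const] at key
  exact tendsto_nhds_unique key tendsto_const_nhds

/-- Reflections transported to `ℂ`. -/
lemma refl_eq (e : EuclideanSpace ℝ (Fin 2) ≃ₗᵢ[ℝ] ℂ) (u : EuclideanSpace ℝ (Fin 2))
    (hu : ‖u‖ = 1) (x : EuclideanSpace ℝ (Fin 2)) :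
    e (reflMap u x) = (e u) ^ 2 * (starRingEnd ℂ) (e x) := by
  set w := e u with hw
  set z := e x with hz
  have hinner : ⟪u, x⟫ = ((starRingEnd ℂ) w * z).re := by
    rw [hw, hz, mul_comm, ← Complex.inner]
    exact (e.inner_map_map u x).symm
  have hw1 : (starRingEnd ℂ) w * w = 1 := by
    have : ‖w‖ = 1 := by
      rw [hw, e.norm_map, hu]
    rw [mul_comm, Complex.mul_conj, Complex.normSq_eq_norm_sq, this]
    norm_num
  have hre : ((2 * ((starRingEnd ℂ) w * z).re : ℝ) : ℂ)
      = (starRingEnd ℂ) w * z + w * (starRingEnd ℂ) z := by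
    have h := Complex.add_conj ((starRingEnd ℂ) w * z)
    rw [map_mul, Complex.conj_conj] at h
    exact h.symm
  have : e (reflMap u x) = ((2 * ⟪u, x⟫ : ℝ) : ℂ) * w - z := by
    simp only [reflMap, map_sub, LinearIsometryEquiv.map_smul]
    rw [Complex.real_smul, hz]
  rw [this, hinner, hre]
  linear_combination z * hw1

/-- if `X` in `ℝ²` satisfies the Carleman condition and has infinitely many
directions of axial symmetry, then `X` is spherically symmetric. -/
theorem infinite_axes_spherical {Ω : Type*} [MeasurableSpace Ω]
    (μ : Measure Ω) [IsProbabilityMeasure μ]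
    (X : Ω → EuclideanSpace ℝ (Fin 2)) (hX : Measurable X) (hC : Carleman μ X)
    (hinf : {u : EuclideanSpace ℝ (Fin 2) | ‖u‖ = 1 ∧
      Measure.map X μ = Measure.map (fun ω => reflMap u (X ω)) μ}.Infinite) :
    SphericallySymmetric μ X := by
  classical
  set U : Set (EuclideanSpace ℝ (Fin 2)) := {u | ‖u‖ = 1 ∧
      Measure.map X μ = Measure.map (fun ω => reflMap u (X ω)) μ} with hU
  set e : EuclideanSpace ℝ (Fin 2) ≃ₗᵢ[ℝ] ℂ := Complex.orthonormalBasisOneI.repr.symm with he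
  have me : Measurable (⇑e) := e.continuous.measurable
  have me' : Measurable (⇑e.symm) := e.symm.continuous.measurable
  have mconj : Measurable (starRingEnd ℂ) := Complex.continuous_conj.measurable
  set Y : Ω → ℂ := fun ω => e (X ω) with hY
  have hYm : Measurable Y := me.comp hX
  set ν : Measure ℂ := Measure.map Y μ with hν
  haveI : IsProbabilityMeasure ν := Measure.isProbabilityMeasure_map hYm.aemeasurable
  -- reflection invariance transported to ℂ
  have hrefl : ∀ u ∈ U, Measure.map (fun z => (e u) ^ 2 * (starRingEnd ℂ) z) ν = ν := by
    intro u hu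
    obtain ⟨hu1, hu2⟩ := hu
    have hRc : Continuous (reflMap u) := by
      unfold reflMap
      fun_prop
    have hRm : Measurable fun ω => reflMap u (X ω) := hRc.measurable.comp hX
    have mg : Measurable fun z : ℂ => (e u) ^ 2 * (starRingEnd ℂ) z :=
      (mconj.const_mul _)
    calc Measure.map (fun z => (e u) ^ 2 * (starRingEnd ℂ) z) ν
        = Measure.map (fun ω => (e u) ^ 2 * (starRingEnd ℂ) (Y ω)) μ := by
          rw [hν, Measure.map_map mg hYm]; rfl
      _ = Measure.map (fun ω => e (reflMap u (X ω))) μ := by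
          congr 1
          funext ω
          exact (refl_eq e u hu1 (X ω)).symm
      _ = Measure.map (⇑e) (Measure.map (fun ω => reflMap u (X ω)) μ) := by
          rw [Measure.map_map me hRm]; rfl
      _ = Measure.map (⇑e) (Measure.map X μ) := by rw [← hu2]
      _ = ν := by rw [Measure.map_map me hX]; rfl
  -- rotation invariances coming from pairs of reflections
  have hpair : ∀ u ∈ U, ∀ v ∈ U,
      Measure.map (fun z => ((e u) ^ 2 * (starRingEnd ℂ) ((e v) ^ 2)) * z) ν = ν := by
    intro u hu v hv
    have h := inv_comp (g := fun z => (e u) ^ 2 * (starRingEnd ℂ) z)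
      (h := fun z => (e v) ^ 2 * (starRingEnd ℂ) z)
      (mconj.const_mul _) (mconj.const_mul _) (hrefl u hu) (hrefl v hv)
    have : (fun z => (e u) ^ 2 * (starRingEnd ℂ) ((e v) ^ 2 * (starRingEnd ℂ) z))
        = fun z => ((e u) ^ 2 * (starRingEnd ℂ) ((e v) ^ 2)) * z := by
      funext z
      simp [map_mul, Complex.conj_conj, mul_assoc]
    rwa [this] at h
  -- the subgroup of rotation angles
  set T : AddSubgroup ℝ :=
    { carrier := {t | Measure.map (fun z => ((Circle.exp t : Circle) : ℂ) * z) ν = ν}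
      zero_mem' := by
        simp only [Set.mem_setOf_eq, Circle.exp_zero, Circle.coe_one, one_mul]
        have : (fun z : ℂ => z) = id := rfl
        rw [this, Measure.map_id]
      add_mem' := by
        intro s t hs ht
        simp only [Set.mem_setOf_eq] at *
        have h := inv_comp (g := fun z => ((Circle.exp s : Circle) : ℂ) * z)
          (h := fun z => ((Circle.exp t : Circle) : ℂ) * z)
          (measurable_const_mul _) (measurable_const_mul _) hs ht
        have heq : (fun z => ((Circle.exp s : Circle) : ℂ) * (((Circle.exp t : Circle) : ℂ) * z))
            = fun z => ((Circle.exp (s + t) : Circle) : ℂ) * z := by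
          funext z
          rw [Circle.exp_add]
          push_cast
          ring
        rwa [heq] at h
      neg_mem' := by
        intro t ht
        simp only [Set.mem_setOf_eq] at *
        have hne : ((Circle.exp t : Circle) : ℂ) ≠ 0 := Circle.coe_ne_zero _
        calc Measure.map (fun z => ((Circle.exp (-t) : Circle) : ℂ) * z) ν
            = Measure.map (fun z => ((Circle.exp (-t) : Circle) : ℂ) * z)
                (Measure.map (fun z => ((Circle.exp t : Circle) : ℂ) * z) ν) := by rw [ht]
          _ = Measure.map (fun z => ((Circle.exp (-t) : Circle) : ℂ)
                * (((Circle.exp t : Circle) : ℂ) * z)) ν := by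
              rw [Measure.map_map (measurable_const_mul _) (measurable_const_mul _)]; rfl
          _ = ν := by
              have : (fun z => ((Circle.exp (-t) : Circle) : ℂ)
                  * (((Circle.exp t : Circle) : ℂ) * z)) = fun z : ℂ => z := by
                funext z
                rw [← mul_assoc, ← Circle.coe_mul, ← Circle.exp_add]
                simp
              rw [this]
              have : (fun z : ℂ => z) = id := rfl
              rw [this, Measure.map_id] } with hT
  have hmemT : ∀ t : ℝ, t ∈ T ↔
      Measure.map (fun z => ((Circle.exp t : Circle) : ℂ) * z) ν = ν := fun t => Iff.rfl
  -- T is closed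
  have hTclosed : IsClosed (T : Set ℝ) := by
    apply IsSeqClosed.isClosed
    intro x p hx hxp
    rw [SetLike.mem_coe, hmemT]
    apply inv_limit (a := fun n => ((Circle.exp (x n) : Circle) : ℂ))
    · have hc : Continuous fun t : ℝ => ((Circle.exp t : Circle) : ℂ) := by continuity
      exact (hc.tendsto p).comp hxp
    · intro n
      exact hx n
  -- small nonzero elements of T
  have hWsmall : ∀ δ : ℝ, 0 < δ → ∃ c : ℂ, ‖c‖ = 1 ∧ c ≠ 1 ∧ ‖c - 1‖ < δ ∧
      Measure.map (fun z => c * z) ν = ν := by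
    intro δ hδ
    -- the image of U in ℂ
    have hUinf : (⇑e '' U).Infinite := hinf.image (e.injective.injOn)
    have hUsub : ⇑e '' U ⊆ Metric.sphere (0 : ℂ) 1 := by
      rintro - ⟨u, hu, rfl⟩
      simpa [e.norm_map] using hu.1
    obtain ⟨w, hwK, hwacc⟩ := hUinf.exists_accPt_of_subset_isCompact
      (isCompact_sphere (0 : ℂ) 1) hUsub
    have hw1 : ‖w‖ = 1 := by simpa using hwK
    set r : ℝ := min (δ / 8) (1 / 2) with hr
    have hr0 : 0 < r := lt_min (by linarith) (by norm_num)
    obtain ⟨p₁, hp₁mem, hp₁ne⟩ := accPt_iff_nhds.1 hwacc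
      (Metric.ball w r) (Metric.ball_mem_nhds w hr0)
    obtain ⟨p₂, hp₂mem, hp₂ne⟩ := accPt_iff_nhds.1 hwacc
      (Metric.ball w (min r (dist p₁ w)))
      (Metric.ball_mem_nhds w (lt_min hr0 (dist_pos.2 hp₁ne)))
    have hp₁W : p₁ ∈ ⇑e '' U := hp₁mem.2
    have hp₂W : p₂ ∈ ⇑e '' U := hp₂mem.2
    have hp₁b : dist p₁ w < r := Metric.mem_ball.1 hp₁mem.1
    have hp₂b : dist p₂ w < r := lt_of_lt_of_le (Metric.mem_ball.1 hp₂mem.1) (min_le_left _ _)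
    have hp₁₂ : p₁ ≠ p₂ := by
      intro h
      have := Metric.mem_ball.1 hp₂mem.1
      rw [← h] at this
      exact absurd (lt_of_lt_of_le this (min_le_right _ _)) (lt_irrefl _)
    have hp₁n : ‖p₁‖ = 1 := by simpa using hUsub hp₁W
    have hp₂n : ‖p₂‖ = 1 := by simpa using hUsub hp₂W
    have hdiff : ‖p₁ - p₂‖ < 2 * r := by
      calc ‖p₁ - p₂‖ = ‖(p₁ - w) - (p₂ - w)‖ := by ring_nf
        _ ≤ ‖p₁ - w‖ + ‖p₂ - w‖ := norm_sub_le _ _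
        _ < r + r := by
            rw [← dist_eq_norm, ← dist_eq_norm]
            exact add_lt_add hp₁b hp₂b
        _ = 2 * r := by ring
    have hsum : 1 ≤ ‖p₁ + p₂‖ := by
      have h2w : ‖(2 : ℂ) * w‖ = 2 := by
        rw [norm_mul, hw1]; simp
      have : ‖(2:ℂ) * w‖ - (‖p₁ - w‖ + ‖p₂ - w‖) ≤ ‖p₁ + p₂‖ := by
        have h := norm_sub_le (p₁ - w) (w - (p₁ + p₂) + (p₁ - w))
        have hid : (2:ℂ) * w - (p₁ + p₂) = (w - p₁) + (w - p₂) := by ring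
        have h2 : ‖(2:ℂ) * w‖ ≤ ‖(2:ℂ)*w - (p₁+p₂)‖ + ‖p₁ + p₂‖ := by
          calc ‖(2:ℂ) * w‖ = ‖((2:ℂ)*w - (p₁+p₂)) + (p₁+p₂)‖ := by ring_nf
            _ ≤ ‖(2:ℂ)*w - (p₁+p₂)‖ + ‖p₁ + p₂‖ := norm_add_le _ _
        have h3 : ‖(2:ℂ)*w - (p₁+p₂)‖ ≤ ‖p₁ - w‖ + ‖p₂ - w‖ := by
          rw [hid]
          calc ‖(w - p₁) + (w - p₂)‖ ≤ ‖w - p₁‖ + ‖w - p₂‖ := norm_add_le _ _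
            _ = ‖p₁ - w‖ + ‖p₂ - w‖ := by rw [norm_sub_rev w p₁, norm_sub_rev w p₂]
        linarith
      have hb1 : ‖p₁ - w‖ < r := by rw [← dist_eq_norm]; exact hp₁b
      have hb2 : ‖p₂ - w‖ < r := by rw [← dist_eq_norm]; exact hp₂b
      have hrhalf : r ≤ 1/2 := min_le_right _ _
      linarith
    -- the rotation c
    refine ⟨p₁ ^ 2 * (starRingEnd ℂ) (p₂ ^ 2), ?_, ?_, ?_, ?_⟩
    · rw [norm_mul, norm_pow, RCLike.norm_conj, norm_pow, hp₁n, hp₂n]; norm_num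
    · intro h
      have hp₂sq : (p₂ : ℂ) ^ 2 ≠ 0 := pow_ne_zero _ (by
        intro h0; rw [h0] at hp₂n; simp at hp₂n)
      have hcc : (starRingEnd ℂ) (p₂ ^ 2) * (p₂ ^ 2) = 1 := by
        rw [mul_comm, Complex.mul_conj, Complex.normSq_eq_norm_sq,
          norm_pow, hp₂n]
        norm_num
      have : p₁ ^ 2 = p₂ ^ 2 := by
        calc p₁ ^ 2 = p₁ ^ 2 * ((starRingEnd ℂ) (p₂ ^ 2) * p₂ ^ 2) := by rw [hcc, mul_one]
          _ = (p₁ ^ 2 * (starRingEnd ℂ) (p₂ ^ 2)) * p₂ ^ 2 := by ring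
          _ = p₂ ^ 2 := by rw [h, one_mul]
      have hfac : (p₁ - p₂) * (p₁ + p₂) = 0 := by
        have : p₁ ^ 2 - p₂ ^ 2 = 0 := by rw [this]; ring
        calc (p₁ - p₂) * (p₁ + p₂) = p₁ ^ 2 - p₂ ^ 2 := by ring
          _ = 0 := this
      rcases mul_eq_zero.1 hfac with h1 | h2
      · exact hp₁₂ (sub_eq_zero.1 h1)
      · have : ‖p₁ + p₂‖ = 0 := by rw [h2]; simp
        rw [this] at hsum; linarith
    · have hconj2 : (starRingEnd ℂ) (p₂ ^ 2) * p₂ ^ 2 = 1 := by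
        rw [mul_comm, Complex.mul_conj, Complex.normSq_eq_norm_sq,
          norm_pow, hp₂n]
        norm_num
      have : p₁ ^ 2 * (starRingEnd ℂ) (p₂ ^ 2) - 1
          = (starRingEnd ℂ) (p₂ ^ 2) * (p₁ ^ 2 - p₂ ^ 2) := by
        rw [mul_sub]
        rw [mul_comm ((starRingEnd ℂ) (p₂ ^ 2)) (p₁ ^ 2)]
        rw [hconj2]
      rw [this, norm_mul, RCLike.norm_conj, norm_pow, hp₂n]
      have hfac : ‖p₁ ^ 2 - p₂ ^ 2‖ = ‖p₁ - p₂‖ * ‖p₁ + p₂‖ := by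
        rw [← norm_mul]; congr 1; ring
      have hsumle : ‖p₁ + p₂‖ ≤ 2 := by
        calc ‖p₁ + p₂‖ ≤ ‖p₁‖ + ‖p₂‖ := norm_add_le _ _
          _ = 2 := by rw [hp₁n, hp₂n]; norm_num
      have hrδ : r ≤ δ / 8 := min_le_left _ _
      have : ‖p₁ ^ 2 - p₂ ^ 2‖ ≤ ‖p₁ - p₂‖ * 2 := by
        rw [hfac]
        exact mul_le_mul_of_nonneg_left hsumle (norm_nonneg _)
      have hlt : ‖p₁ ^ 2 - p₂ ^ 2‖ < 4 * r := by
        calc ‖p₁ ^ 2 - p₂ ^ 2‖ ≤ ‖p₁ - p₂‖ * 2 := this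
          _ < (2 * r) * 2 := by
              apply mul_lt_mul_of_pos_right hdiff; norm_num
          _ = 4 * r := by ring
      calc (1 : ℝ) ^ 2 * ‖p₁ ^ 2 - p₂ ^ 2‖ = ‖p₁ ^ 2 - p₂ ^ 2‖ := by norm_num
        _ < 4 * r := hlt
        _ ≤ 4 * (δ / 8) := by linarith
        _ < δ := by linarith
    · obtain ⟨u, hu, hue⟩ := hp₁W
      obtain ⟨v, hv, hve⟩ := hp₂W
      rw [← hue, ← hve]
      exact hpair u hu v hv
  have hsmall : ∀ ε : ℝ, 0 < ε → ∃ t ∈ T, t ≠ 0 ∧ |t| < ε := by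
    intro ε hε
    have hcont : ContinuousAt Complex.arg 1 :=
      Complex.continuousAt_arg (by simp)
    rw [Metric.continuousAt_iff] at hcont
    obtain ⟨δ, hδ0, hδ⟩ := hcont ε hε
    obtain ⟨c, hc1, hcne, hcδ, hcinv⟩ := hWsmall δ hδ0
    refine ⟨Complex.arg c, ?_, ?_, ?_⟩
    · rw [hmemT]
      have habs : ‖c‖ = 1 := by assumption
      have : ((Circle.exp (Complex.arg c) : Circle) : ℂ) = c := by
        rw [Circle.coe_exp]
        have := Complex.norm_mul_exp_arg_mul_I c
        rw [habs] at this
        simpa using this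
      rw [this]
      exact hcinv
    · intro h0
      have := Complex.norm_mul_exp_arg_mul_I c
      rw [h0] at this
      simp only [Complex.ofReal_zero, zero_mul, Complex.exp_zero, mul_one] at this
      have habs : ‖c‖ = 1 := by assumption
      rw [habs] at this
      exact hcne (by exact_mod_cast this.symm)
    · have := hδ (by rwa [Complex.dist_eq])
      rwa [Complex.arg_one, Real.dist_eq, sub_zero] at this
  -- T = ℝ
  have hTall : ∀ t : ℝ, t ∈ T := by
    rcases AddSubgroup.dense_or_cyclic T with hd | ⟨a, ha⟩
    · intro t
      have : (T : Set ℝ) = Set.univ := hTclosed.closure_eq ▸ hd.closure_eq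
      rw [← SetLike.mem_coe, this]
      trivial
    · exfalso
      by_cases ha0 : a = 0
      · obtain ⟨t, htT, htne, -⟩ := hsmall 1 one_pos
        rw [ha, ha0] at htT
        rw [AddSubgroup.mem_closure_singleton] at htT
        obtain ⟨n, hn⟩ := htT
        simp at hn
        exact htne hn.symm
      · obtain ⟨t, htT, htne, htlt⟩ := hsmall |a| (abs_pos.2 ha0)
        rw [ha, AddSubgroup.mem_closure_singleton] at htT
        obtain ⟨n, hn⟩ := htT
        have hn0 : n ≠ 0 := by
          intro h; rw [h] at hn; simp at hn; exact htne hn.symm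
        have h1 : (1:ℝ) ≤ ((|n| : ℤ) : ℝ) := by exact_mod_cast Int.one_le_abs hn0
        have : |a| ≤ |t| := by
          rw [← hn, abs_zsmul, zsmul_eq_mul]
          nlinarith [abs_nonneg a]
        linarith
  -- all rotations are symmetries
  have hrot : ∀ c : ℂ, ‖c‖ = 1 → Measure.map (fun z => c * z) ν = ν := by
    intro c hc
    have habs : ‖c‖ = 1 := by assumption
    have hcoe : ((Circle.exp (Complex.arg c) : Circle) : ℂ) = c := by
      rw [Circle.coe_exp]
      have := Complex.norm_mul_exp_arg_mul_I c
      rw [habs] at this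
      simpa using this
    have := hTall (Complex.arg c)
    rw [hmemT, hcoe] at this
    exact this
  -- conjugation is a symmetry
  have hconj : Measure.map (starRingEnd ℂ) ν = ν := by
    obtain ⟨u₀, hu₀⟩ := hinf.nonempty
    have h₀ := hrefl u₀ hu₀
    have hw0 : ‖e u₀‖ = 1 := by rw [e.norm_map]; exact hu₀.1
    have hcn : ‖(starRingEnd ℂ) ((e u₀) ^ 2)‖ = 1 := by
      rw [RCLike.norm_conj, norm_pow, hw0]; norm_num
    have h := inv_comp (g := fun z => (starRingEnd ℂ) ((e u₀) ^ 2) * z)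
      (h := fun z => (e u₀) ^ 2 * (starRingEnd ℂ) z)
      (measurable_const_mul _) (mconj.const_mul _) (hrot _ hcn) h₀
    have heq : (fun z => (starRingEnd ℂ) ((e u₀) ^ 2) * ((e u₀) ^ 2 * (starRingEnd ℂ) z))
        = starRingEnd ℂ := by
      funext z
      have hcc : (starRingEnd ℂ) ((e u₀) ^ 2) * ((e u₀) ^ 2) = 1 := by
        rw [mul_comm, Complex.mul_conj, Complex.normSq_eq_norm_sq,
          norm_pow, hw0]
        norm_num
      rw [← mul_assoc, hcc, one_mul]
    rwa [heq] at h
  -- conclude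
  intro Q
  set f : ℂ ≃ₗᵢ[ℝ] ℂ := (e.symm.trans Q).trans e with hf
  have hfinv : Measure.map (⇑f) ν = ν := by
    obtain ⟨a, hfa | hfa⟩ := linear_isometry_complex f
    · have : (⇑f : ℂ → ℂ) = fun z => (a : ℂ) * z := by
        funext z; rw [hfa, rotation_apply]
      rw [this]
      exact hrot _ (Circle.norm_coe a)
    · have : (⇑f : ℂ → ℂ) = fun z => (a : ℂ) * (starRingEnd ℂ) z := by
        funext z; rw [hfa]; simp [rotation_apply]
      rw [this]
      exact inv_comp (measurable_const_mul _) mconj (hrot _ (Circle.norm_coe a)) hconj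
  have hfm : Measurable (⇑f) := f.continuous.measurable
  have hQX : (fun ω => Q (X ω)) = fun ω => e.symm (f (Y ω)) := by
    funext ω
    simp [hf, hY]
  calc Measure.map (fun ω => Q (X ω)) μ
      = Measure.map (fun ω => e.symm (f (Y ω))) μ := by rw [hQX]
    _ = Measure.map (⇑e.symm) (Measure.map (fun ω => f (Y ω)) μ) := by
        exact (Measure.map_map me' (hfm.comp hYm)).symm
    _ = Measure.map (⇑e.symm) (Measure.map (⇑f) ν) := by
        rw [hν, Measure.map_map hfm hYm]; rfl
    _ = Measure.map (⇑e.symm) ν := by rw [hfinv]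
    _ = Measure.map (fun ω => e.symm (Y ω)) μ := by
        rw [hν, Measure.map_map me' hYm]; rfl
    _ = Measure.map X μ := by
        congr 1
        funext ω
        simp [hY]
end

section
/- Fix ε > 0 and let X be a Gaussian random vector in ℝ³ with mean 0 and diagonal covariance matrix diag(1+ε, 1, 1). Then every unit vector u ∈ S² whose first coordinate is zero is a direction of axial symmetry of X (i.e. X =_d R_u X), yet X is not spherically symmetric. Hence, in dimension 3, a random vector satisfying the Carleman condition can have infinitely many symmetry axes without being spherically symmetric. -/
open MeasureTheory ProbabilityTheory
open scoped RealInnerProductSpace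

open scoped ENNReal NNReal

lemma lintegral_pi_prod' {n : ℕ} {α : Fin n → Type*} [∀ i, MeasurableSpace (α i)]
    (μ : ∀ i, Measure (α i)) [∀ i, SigmaFinite (μ i)]
    (f : ∀ i, α i → ℝ≥0∞) (hf : ∀ i, Measurable (f i)) :
    ∫⁻ x, ∏ i, f i (x i) ∂Measure.pi μ = ∏ i, ∫⁻ x, f i x ∂μ i := by
  induction n with
  | zero => simp [Measure.pi_of_empty]
  | succ n ih =>
    have h := (measurePreserving_piFinSuccAbove μ 0)
    have key : ∫⁻ z : α 0 × (∀ j : Fin n, α ((0 : Fin (n+1)).succAbove j)),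
        f 0 z.1 * ∏ j, f ((0 : Fin (n+1)).succAbove j) (z.2 j)
        ∂((μ 0).prod (Measure.pi fun j => μ ((0 : Fin (n+1)).succAbove j))) =
        ∫⁻ x, ∏ i, f i (x i) ∂Measure.pi μ := by
      rw [← h.map_eq]
      rw [lintegral_map]
      · congr 1
        funext x
        rw [Fin.prod_univ_succ]
        rfl
      · exact ((hf 0).comp measurable_fst).mul
          (Finset.measurable_prod _ fun j _ => (hf _).comp ((measurable_pi_apply j).comp measurable_snd))
      · exact (MeasurableEquiv.piFinSuccAbove α 0).measurable
    have hg : Measurable fun (y : ∀ j : Fin n, α ((0 : Fin (n+1)).succAbove j)) =>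
        ∏ j, f ((0 : Fin (n+1)).succAbove j) (y j) :=
      Finset.measurable_prod _ fun j _ => ((hf _).comp (measurable_pi_apply j))
    rw [← key, lintegral_prod_mul ((hf 0)).aemeasurable hg.aemeasurable,
      ih _ _ fun j => hf _, Fin.prod_univ_succ]
    simp [Fin.zero_succAbove]
    rfl

lemma map_withDensity_equiv' {α β : Type*} [MeasurableSpace α] [MeasurableSpace β]
    (e : α ≃ᵐ β) (μ : Measure α) (f : β → ℝ≥0∞) (hf : Measurable f) :
    Measure.map e (μ.withDensity (f ∘ e)) = (Measure.map e μ).withDensity f := by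
  ext s hs
  rw [Measure.map_apply e.measurable hs, withDensity_apply _ hs,
    withDensity_apply _ (e.measurable hs), setLIntegral_map hs hf e.measurable]
  rfl

lemma indicator_pi_prod {n : ℕ} (s : Fin n → Set ℝ) (f : Fin n → ℝ → ℝ≥0∞) (y : Fin n → ℝ) :
    (Set.pi Set.univ s).indicator (fun y => ∏ i, f i (y i)) y
      = ∏ i, (s i).indicator (f i) (y i) := by
  by_cases h : y ∈ Set.pi Set.univ s
  · rw [Set.indicator_of_mem h]
    exact Finset.prod_congr rfl fun i _ => (Set.indicator_of_mem (h i (Set.mem_univ i)) _).symm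
  · rw [Set.indicator_of_notMem h]
    simp only [Set.mem_pi, Set.mem_univ, true_implies, not_forall] at h
    obtain ⟨i, hi⟩ := h
    exact (Finset.prod_eq_zero (Finset.mem_univ i) (Set.indicator_of_notMem hi _)).symm

lemma pi_gauss_withDensity {n : ℕ} (v : Fin n → NNReal) (hv : ∀ i, v i ≠ 0) :
    Measure.pi (fun i => gaussianReal 0 (v i)) =
      (volume : Measure (Fin n → ℝ)).withDensity (fun y => ∏ i, gaussianPDF 0 (v i) (y i)) := by
  refine Measure.pi_eq fun s hs => ?_
  rw [withDensity_apply _ (MeasurableSet.univ_pi hs),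
    ← lintegral_indicator (MeasurableSet.univ_pi hs)]
  calc ∫⁻ (y : Fin n → ℝ), (Set.pi Set.univ s).indicator (fun y => ∏ i, gaussianPDF 0 (v i) (y i)) y ∂volume
      = ∫⁻ (y : Fin n → ℝ), ∏ i, (s i).indicator (gaussianPDF 0 (v i)) (y i) ∂volume := by
        simp_rw [indicator_pi_prod]
    _ = ∏ i, ∫⁻ (x : ℝ), (s i).indicator (gaussianPDF 0 (v i)) x ∂volume := by
        rw [volume_pi]
        exact lintegral_pi_prod' _ _ fun i => (measurable_gaussianPDF _ _).indicator (hs i)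
    _ = ∏ i, gaussianReal 0 (v i) (s i) := by
        refine Finset.prod_congr rfl fun i _ => ?_
        rw [lintegral_indicator (hs i), gaussianReal_of_var_ne_zero 0 (hv i),
          withDensity_apply _ (hs i)]

example : ⇑(EuclideanSpace.equiv (Fin 3) ℝ).symm = ⇑(MeasurableEquiv.toLp 2 (Fin 3 → ℝ)) := rfl

lemma reflMap_eq_reflection {d : ℕ} (u : EuclideanSpace ℝ (Fin d)) (hu : ‖u‖ = 1) :
    reflMap u = ⇑(Submodule.reflection (ℝ ∙ u) : EuclideanSpace ℝ (Fin d) ≃ₗᵢ[ℝ] _) := by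
  funext x
  rw [reflMap, Submodule.reflection_apply, Submodule.starProjection_singleton]
  rw [hu]
  simp [two_smul, two_mul, add_smul]

lemma gaussianPDF_neg' (v : ℝ≥0) (a : ℝ) : gaussianPDF 0 v (-a) = gaussianPDF 0 v a := by
  simp [gaussianPDF, gaussianPDFReal, neg_sq]

open Real in
lemma gaussianPDF_one_pair {a b c d : ℝ} (h : a^2 + b^2 = c^2 + d^2) :
    gaussianPDF 0 1 a * gaussianPDF 0 1 b = gaussianPDF 0 1 c * gaussianPDF 0 1 d := by
  have key : ∀ a b : ℝ, gaussianPDFReal 0 1 a * gaussianPDFReal 0 1 b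
      = ((Real.sqrt (2 * π))⁻¹) ^ 2 * Real.exp (-(a ^ 2 + b ^ 2) / 2) := by
    intro a b
    simp only [gaussianPDFReal, NNReal.coe_one, mul_one, sub_zero]
    rw [mul_mul_mul_comm, ← Real.exp_add]
    exact congrArg₂ (· * ·) (by ring) (congrArg Real.exp (by ring))
  rw [gaussianPDF, gaussianPDF, gaussianPDF, gaussianPDF,
    ← ENNReal.ofReal_mul (gaussianPDFReal_nonneg _ _ _),
    ← ENNReal.ofReal_mul (gaussianPDFReal_nonneg _ _ _), key, key, h]

/-- the centered Gaussian distribution on `ℝ³` with diagonal covariance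
`diag(1+ε, 1, 1)` is axially symmetric around every unit vector whose first coordinate
vanishes, yet it is not spherically symmetric. -/
theorem gaussian_counterexample_dim3 (ε : ℝ) (hε : 0 < ε)
    (P : Measure (EuclideanSpace ℝ (Fin 3)))
    (hP : P = Measure.map (⇑(EuclideanSpace.equiv (Fin 3) ℝ).symm)
      (Measure.pi fun i => gaussianReal 0 (if i = 0 then (1 + ε).toNNReal else 1))) :
    (∀ u : EuclideanSpace ℝ (Fin 3), ‖u‖ = 1 → u 0 = 0 →
      Measure.map (reflMap u) P = P) ∧
    ¬ (∀ Q : EuclideanSpace ℝ (Fin 3) ≃ₗᵢ[ℝ] EuclideanSpace ℝ (Fin 3),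
        Measure.map (fun x => Q x) P = P) := by
  set v : Fin 3 → ℝ≥0 := fun i => if i = 0 then (1 + ε).toNNReal else 1 with hv_def
  have hv : ∀ i, v i ≠ 0 := by
    intro i
    by_cases hi : i = 0 <;>
      simp [hv_def, hi, Real.toNNReal_pos.mpr (by linarith : (0:ℝ) < 1 + ε), ne_of_gt]
  set e : EuclideanSpace ℝ (Fin 3) ≃ᵐ (Fin 3 → ℝ) := (MeasurableEquiv.toLp 2 (Fin 3 → ℝ)).symm
  set g : EuclideanSpace ℝ (Fin 3) → ℝ≥0∞ := fun x => ∏ i, gaussianPDF 0 (v i) (x i) with hg_def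
  have hg : Measurable g :=
    Finset.measurable_prod _ fun i _ =>
      (measurable_gaussianPDF _ _).comp ((measurable_pi_apply i).comp e.measurable)
  have hPd : P = (volume : Measure (EuclideanSpace ℝ (Fin 3))).withDensity g := by
    rw [hP]
    have hcoe : ⇑(EuclideanSpace.equiv (Fin 3) ℝ).symm = ⇑e.symm := rfl
    rw [hcoe, pi_gauss_withDensity v hv]
    have hge : (fun y : Fin 3 → ℝ => ∏ i, gaussianPDF 0 (v i) (y i)) = g ∘ ⇑e.symm := rfl
    rw [hge, map_withDensity_equiv' e.symm volume g hg,
      (MeasurePreserving.symm e (EuclideanSpace.volume_preserving_symm_measurableEquiv_toLp (Fin 3))).map_eq]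
  constructor
  · intro u hu hu0
    set R := (Submodule.reflection (ℝ ∙ u) : EuclideanSpace ℝ (Fin 3) ≃ₗᵢ[ℝ] EuclideanSpace ℝ (Fin 3))
    have hR : reflMap u = ⇑R := reflMap_eq_reflection u hu
    have hginv : ∀ x, g (R x) = g x := by
      intro x
      have hy0 : R x 0 = -(x 0) := by
        rw [← hR]
        show ((2 * ⟪u, x⟫) • u - x) 0 = -(x 0)
        simp [hu0]
      have hsum : (R x 0) ^ 2 + ((R x 1) ^ 2 + (R x 2) ^ 2)
          = (x 0) ^ 2 + ((x 1) ^ 2 + (x 2) ^ 2) := by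
        have hn : ‖R x‖ = ‖x‖ := R.norm_map x
        rw [EuclideanSpace.norm_eq, EuclideanSpace.norm_eq] at hn
        have h1 : (0:ℝ) ≤ ∑ i, ‖R x i‖ ^ 2 := Finset.sum_nonneg fun i _ => sq_nonneg _
        have h2 : (0:ℝ) ≤ ∑ i, ‖x i‖ ^ 2 := Finset.sum_nonneg fun i _ => sq_nonneg _
        have hsum' := (Real.sqrt_inj h1 h2).mp hn
        rw [Fin.sum_univ_three, Fin.sum_univ_three] at hsum'
        simp only [Real.norm_eq_abs, sq_abs] at hsum'
        linarith
      have hrest : (R x 1) ^ 2 + (R x 2) ^ 2 = (x 1) ^ 2 + (x 2) ^ 2 := by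
        rw [hy0] at hsum; nlinarith [hsum]
      show ∏ i, gaussianPDF 0 (v i) (R x i) = ∏ i, gaussianPDF 0 (v i) (x i)
      rw [Fin.prod_univ_three, Fin.prod_univ_three]
      have hv0 : v 0 = (1 + ε).toNNReal := rfl
      have hv1 : v 1 = 1 := rfl
      have hv2 : v 2 = 1 := rfl
      rw [hv0, hv1, hv2, hy0, gaussianPDF_neg', mul_assoc, mul_assoc,
        gaussianPDF_one_pair hrest]
    let Rm : EuclideanSpace ℝ (Fin 3) ≃ᵐ EuclideanSpace ℝ (Fin 3) :=
      R.toHomeomorph.toMeasurableEquiv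
    have hcoeR : ⇑Rm = ⇑R := rfl
    have hgR : g ∘ ⇑Rm = g := funext fun x => hginv x
    rw [hPd, hR, ← hcoeR, ← hgR, map_withDensity_equiv' Rm volume g hg, hgR]
    congr 1
    rw [hcoeR]
    exact R.measurePreserving.map_eq
  · intro hQ
    have hcyl : ∀ (i : Fin 3) (s : Set ℝ), MeasurableSet s →
        P {x : EuclideanSpace ℝ (Fin 3) | x i ∈ s} = gaussianReal 0 (v i) s := by
      intro i s hs
      have hA : MeasurableSet {x : EuclideanSpace ℝ (Fin 3) | x i ∈ s} :=
        ((measurable_pi_apply i).comp e.measurable) hs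
      rw [hP]
      have hcoe : ⇑(EuclideanSpace.equiv (Fin 3) ℝ).symm = ⇑e.symm := rfl
      rw [hcoe, Measure.map_apply e.symm.measurable hA]
      have hpre : ⇑e.symm ⁻¹' {x : EuclideanSpace ℝ (Fin 3) | x i ∈ s}
          = Set.pi Set.univ (Function.update (fun _ : Fin 3 => (Set.univ : Set ℝ)) i s) := by
        ext y
        simp only [Set.mem_preimage, Set.mem_setOf_eq, Set.mem_pi, Set.mem_univ, true_implies]
        constructor
        · intro hy j
          by_cases hj : j = i
          · subst hj; have hy' : y j ∈ s := hy; simpa [Function.update] using hy'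
          · simp [Function.update, hj]
        · intro hy
          have := hy i
          exact (by simpa [Function.update] using this : y i ∈ s)
      rw [hpre, Measure.pi_pi]
      have hfac : ∀ j : Fin 3, gaussianReal 0 (v j)
          (Function.update (fun _ : Fin 3 => (Set.univ : Set ℝ)) i s j)
          = if j = i then gaussianReal 0 (v i) s else 1 := by
        intro j
        by_cases hj : j = i
        · subst hj; simp [Function.update]
        · simp [Function.update, hj]
      change ∏ j, gaussianReal 0 (v j) (Function.update (fun _ : Fin 3 => (Set.univ : Set ℝ)) i s j) = _
      simp_rw [hfac]
      simp
    set Q : EuclideanSpace ℝ (Fin 3) ≃ₗᵢ[ℝ] EuclideanSpace ℝ (Fin 3) :=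
      LinearIsometryEquiv.piLpCongrLeft 2 ℝ ℝ (Equiv.swap (0 : Fin 3) 1) with hQ_def
    have hQx : ∀ x : EuclideanSpace ℝ (Fin 3), Q x 0 = x 1 := by
      intro x
      rw [hQ_def]
      simp only [LinearIsometryEquiv.piLpCongrLeft_apply, Equiv.piCongrLeft'_apply,
        Equiv.symm_swap]
      rw [Equiv.swap_apply_left]
    have hmarg : gaussianReal 0 (v 0) = gaussianReal 0 (v 1) := by
      ext s hs
      have hA : MeasurableSet {x : EuclideanSpace ℝ (Fin 3) | x 0 ∈ s} :=
        ((measurable_pi_apply (0 : Fin 3)).comp e.measurable) hs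
      have h3 : (fun x : EuclideanSpace ℝ (Fin 3) => Q x) ⁻¹' {x | x 0 ∈ s}
          = {x : EuclideanSpace ℝ (Fin 3) | x 1 ∈ s} := by
        ext x
        simp [hQx x]
      have := hQ Q
      calc gaussianReal 0 (v 0) s = P {x : EuclideanSpace ℝ (Fin 3) | x 0 ∈ s} :=
            (hcyl 0 s hs).symm
        _ = (Measure.map (fun x => Q x) P) {x : EuclideanSpace ℝ (Fin 3) | x 0 ∈ s} := by
            rw [this]
        _ = P {x : EuclideanSpace ℝ (Fin 3) | x 1 ∈ s} := by
            rw [Measure.map_apply Q.continuous.measurable hA, h3]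
        _ = gaussianReal 0 (v 1) s := hcyl 1 s hs
    -- derive variance equality
    have h1 := rnDeriv_gaussianReal 0 (v 0)
    rw [hmarg] at h1
    have h2 := rnDeriv_gaussianReal 0 (v 1)
    have hae : gaussianPDF 0 (v 0) =ᵐ[volume] gaussianPDF 0 (v 1) := h1.symm.trans h2
    have haeR : gaussianPDFReal 0 (v 0) =ᵐ[volume] gaussianPDFReal 0 (v 1) := by
      filter_upwards [hae] with x hx
      exact (ENNReal.ofReal_eq_ofReal_iff (gaussianPDFReal_nonneg _ _ _)
        (gaussianPDFReal_nonneg _ _ _)).mp hx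
    have hcont : ∀ w : ℝ≥0, Continuous (gaussianPDFReal 0 w) := by
      intro w
      unfold gaussianPDFReal
      fun_prop
    have heq : gaussianPDFReal 0 (v 0) = gaussianPDFReal 0 (v 1) :=
      (Continuous.ae_eq_iff_eq volume (hcont _) (hcont _)).mp haeR
    have h0 := congrFun heq 0
    have hv0 : ((v 0 : ℝ≥0) : ℝ) = 1 + ε := by
      simp [hv_def, Real.coe_toNNReal _ (by linarith : (0:ℝ) ≤ 1 + ε)]
    have hv1 : ((v 1 : ℝ≥0) : ℝ) = 1 := by simp [hv_def]
    simp only [gaussianPDFReal, sub_zero, neg_zero, ne_eq, OfNat.ofNat_ne_zero,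
      not_false_eq_true, zero_pow, zero_div, Real.exp_zero, mul_one, hv0, hv1] at h0
    have hsq : Real.sqrt (2 * Real.pi * (1 + ε)) = Real.sqrt (2 * Real.pi) :=
      inv_injective h0
    have : 2 * Real.pi * (1 + ε) = 2 * Real.pi := by
      refine (Real.sqrt_inj ?_ ?_).mp hsq <;> positivity
    have hpi := Real.pi_pos
    nlinarith
end

section
/- Let P be an absolutely continuous probability distribution on ℝ^d (with respect to Lebesgue measure), let X have distribution P, and fix finitely many directions h₁, …, h_k ∈ S^{d−1}. Then the function g : S^{d−1} → ℝ defined by g(u) = (1/k) Σ_{j=1}^k sup_{t∈ℝ} |F_{⟨X,h_j⟩}(t) − F_{⟨R_uX,h_j⟩}(t)| is continuous on S^{d−1}. -/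
open MeasureTheory
open scoped RealInnerProductSpace

/-- The population quantity
`g(u) = (1/k) Σ_j sup_t |F_{⟨X,h_j⟩}(t) − F_{⟨R_uX,h_j⟩}(t)|` for `X ~ P`. -/
noncomputable def popG {d k : ℕ} (P : Measure (EuclideanSpace ℝ (Fin d)))
    (h : Fin k → EuclideanSpace ℝ (Fin d)) (u : EuclideanSpace ℝ (Fin d)) : ℝ :=
  (1 / (k : ℝ)) * ∑ j, ⨆ t : ℝ,
    |(P {x | ⟪x, h j⟫ ≤ t}).toReal - (P {x | ⟪reflMap u x, h j⟫ ≤ t}).toReal|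

section Aux

open Filter Set Topology

variable {d : ℕ}
local notation "E" => EuclideanSpace ℝ (Fin d)

lemma hyperplane_null (v : E) (hv : v ≠ 0) (t : ℝ) :
    (volume : Measure (EuclideanSpace ℝ (Fin d))) {x | ⟪x, v⟫ = t} = 0 := by
  set c : E := -((t / ‖v‖^2) • v) with hc
  have hker : {y : E | ⟪y, v⟫ = 0} = (LinearMap.ker (innerSL ℝ v : E →ₗ[ℝ] ℝ) : Set E) := by
    ext y
    rw [mem_setOf_eq, SetLike.mem_coe, LinearMap.mem_ker, ContinuousLinearMap.coe_coe, innerSL_apply_apply, real_inner_comm]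
  have hset : {x : E | ⟪x, v⟫ = t} = (fun x => x + c) ⁻¹' {y : E | ⟪y, v⟫ = 0} := by
    ext x
    have hcv : ⟪c, v⟫ = -t := by
      rw [hc]
      rw [inner_neg_left, real_inner_smul_left, real_inner_self_eq_norm_sq]
      field_simp [norm_ne_zero_iff.2 hv]
    simp only [mem_setOf_eq, mem_preimage, inner_add_left, hcv]
    constructor <;> intro h <;> linarith
  rw [hset, hker, measure_preimage_add_right]
  exact Measure.addHaar_submodule _ _ (by
    intro htop
    have : v ∈ LinearMap.ker (innerSL ℝ v : E →ₗ[ℝ] ℝ) := htop ▸ Submodule.mem_top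
    rw [LinearMap.mem_ker] at this
    simp only [ContinuousLinearMap.coe_coe, innerSL_apply_apply] at this
    exact hv (inner_self_eq_zero.mp this))

lemma cdf_diff (μ : Measure ℝ) [IsFiniteMeasure μ] {s u : ℝ} (hsu : s ≤ u) :
    (μ (Iic u)).toReal - (μ (Iic s)).toReal = (μ (Ioc s u)).toReal := by
  have h : Iic u = Iic s ∪ Ioc s u := (Set.Iic_union_Ioc_eq_Iic hsu).symm
  rw [h, measure_union (Set.Iic_disjoint_Ioc le_rfl) measurableSet_Ioc,
    ENNReal.toReal_add (measure_ne_top μ _) (measure_ne_top μ _)]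
  ring

lemma cdf_mono (μ : Measure ℝ) [IsFiniteMeasure μ] :
    Monotone (fun t => (μ (Iic t)).toReal) := fun s u hsu =>
  ENNReal.toReal_mono (measure_ne_top μ _) (measure_mono (Iic_subset_Iic.2 hsu))

lemma cdf_cont (μ : Measure ℝ) [IsFiniteMeasure μ] (hatom : ∀ t, μ {t} = 0) :
    Continuous (fun t => (μ (Iic t)).toReal) := by
  rw [continuous_iff_continuousAt]
  intro t₀
  rw [Metric.continuousAt_iff]
  intro ε hε
  have hinter : (⋂ n : ℕ, Ioc (t₀ - 1/(n+1)) (t₀ + 1/(n+1))) = {t₀} := by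
    ext x
    simp only [mem_iInter, mem_Ioc, mem_singleton_iff]
    constructor
    · intro hx
      have h1 : x ≤ t₀ := by
        by_contra hlt
        push_neg at hlt
        obtain ⟨n, hn⟩ := exists_nat_one_div_lt (sub_pos.2 hlt)
        have := (hx n).2
        linarith [hn]
      have h2 : t₀ ≤ x := by
        by_contra hlt
        push_neg at hlt
        obtain ⟨n, hn⟩ := exists_nat_one_div_lt (sub_pos.2 hlt)
        have := (hx n).1
        linarith [hn]
      linarith
    · rintro rfl
      intro n
      have : (0:ℝ) < 1/(n+1) := by positivity
      constructor <;> linarith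
  have key : Tendsto (fun n : ℕ => μ (Ioc (t₀ - 1/(n+1)) (t₀ + 1/(n+1)))) atTop (𝓝 0) := by
    have h1 := tendsto_measure_iInter_atTop (μ := μ)
      (s := fun n : ℕ => Ioc (t₀ - 1/(n+1)) (t₀ + 1/(n+1)))
      (fun n => measurableSet_Ioc.nullMeasurableSet)
      (fun m n hmn => by
        have hmn' : (m:ℝ) ≤ n := Nat.cast_le.2 hmn
        have hd : (1:ℝ)/(n+1) ≤ 1/(m+1) :=
          one_div_le_one_div_of_le (by positivity) (by linarith)
        apply Ioc_subset_Ioc <;> linarith)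
      ⟨0, measure_ne_top μ _⟩
    rwa [hinter, hatom] at h1
  have key' : Tendsto (fun n : ℕ => (μ (Ioc (t₀ - 1/(n+1)) (t₀ + 1/(n+1)))).toReal) atTop (𝓝 0) := by
    have := (ENNReal.tendsto_toReal (by simp : (0:ENNReal) ≠ ⊤)).comp key
    simpa [Function.comp_def] using this
  obtain ⟨n₀, hn₀⟩ := (key'.eventually (gt_mem_nhds hε)).exists
  refine ⟨1/(n₀+1), by positivity, ?_⟩
  intro s hs
  rw [Real.dist_eq] at hs ⊢
  set δ : ℝ := 1/(n₀+1) with hδ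
  have hstrip : ∀ a b : ℝ, t₀ - δ ≤ a → b ≤ t₀ + δ →
      (μ (Ioc a b)).toReal < ε :=
    fun a b ha hb => lt_of_le_of_lt
      (ENNReal.toReal_mono (measure_ne_top μ _) (measure_mono (Ioc_subset_Ioc ha hb))) hn₀
  rw [abs_lt] at hs
  rcases le_total s t₀ with hle | hle
  · rw [abs_sub_lt_iff]
    constructor
    · have := cdf_mono μ hle
      simp only at this
      linarith
    · rw [cdf_diff μ hle]
      exact hstrip s t₀ (by linarith) (by linarith)
  · rw [abs_sub_lt_iff]
    constructor
    · rw [cdf_diff μ hle]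
      exact hstrip t₀ s (by linarith) (by linarith)
    · have := cdf_mono μ hle
      simp only at this
      linarith

lemma cdf_atBot (μ : Measure ℝ) [IsProbabilityMeasure μ] :
    Tendsto (fun t => (μ (Iic t)).toReal) atBot (𝓝 0) := by
  have := ProbabilityTheory.tendsto_cdf_atBot μ
  refine this.congr fun t => ?_
  rw [ProbabilityTheory.cdf_eq_real]; rfl

lemma cdf_atTop (μ : Measure ℝ) [IsProbabilityMeasure μ] :
    Tendsto (fun t => (μ (Iic t)).toReal) atTop (𝓝 1) := by
  have := ProbabilityTheory.tendsto_cdf_atTop μ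
  refine this.congr fun t => ?_
  rw [ProbabilityTheory.cdf_eq_real]; rfl

lemma polya {ι : Type*} {l : Filter ι} {F : ℝ → ℝ} {G : ι → ℝ → ℝ}
    (hFc : Continuous F) (hFm : Monotone F)
    (hF0 : Tendsto F atBot (𝓝 0)) (hF1 : Tendsto F atTop (𝓝 1))
    (hGm : ∀ i, Monotone (G i)) (hG0 : ∀ i t, 0 ≤ G i t) (hG1 : ∀ i t, G i t ≤ 1)
    (hpt : ∀ t, Tendsto (fun i => G i t) l (𝓝 (F t))) :
    Tendsto (fun i => ⨆ t, |G i t - F t|) l (𝓝 0) := by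
  have hF0' : ∀ t, 0 ≤ F t := fun t =>
    le_of_tendsto hF0 (eventually_atBot.2 ⟨t, fun s hs => hFm hs⟩)
  have hF1' : ∀ t, F t ≤ 1 := fun t =>
    ge_of_tendsto hF1 (eventually_atTop.2 ⟨t, fun s hs => hFm hs⟩)
  rw [Metric.tendsto_nhds]
  intro ε hε
  set ε' := ε/3 with hε'def
  have hε' : 0 < ε' := by positivity
  obtain ⟨a₀, ha₀⟩ := (hF0.eventually (gt_mem_nhds hε')).exists
  obtain ⟨b₀, hb₀⟩ := (hF1.eventually (lt_mem_nhds (by linarith : 1 - ε' < 1))).exists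
  set a := min a₀ b₀ with hadef
  set b := max a₀ b₀ with hbdef
  have hab : a ≤ b := min_le_max
  have hFa : F a < ε' := lt_of_le_of_lt (hFm (min_le_left _ _)) ha₀
  have hFb : 1 - ε' < F b := lt_of_lt_of_le hb₀ (hFm (le_max_right _ _))
  -- local oscillation control
  have hosc : ∀ s : ℝ, ∃ η > 0, F (s + η) - F (s - η) < ε' := by
    intro s
    have hc := hFc.continuousAt (x := s)
    rw [Metric.continuousAt_iff] at hc
    obtain ⟨δ, hδpos, hδ⟩ := hc (ε'/2) (by positivity)
    refine ⟨δ/2, by positivity, ?_⟩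
    have d1 : dist (s + δ/2) s < δ := by
      rw [Real.dist_eq]
      have h : s + δ/2 - s = δ/2 := by ring
      rw [h, abs_of_pos (by positivity)]; linarith
    have d2 : dist (s - δ/2) s < δ := by
      rw [Real.dist_eq]
      have h : s - δ/2 - s = -(δ/2) := by ring
      rw [h, abs_neg, abs_of_pos (by positivity)]; linarith
    have e1 := hδ d1
    have e2 := hδ d2
    rw [Real.dist_eq, abs_lt] at e1 e2
    linarith [e1.2, e2.1]
  choose η hηpos hηε using hosc
  -- compact cover
  have hcov : Icc a b ⊆ ⋃ s ∈ Icc a b, Ioo (s - η s) (s + η s) := fun s hs =>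
    mem_biUnion hs (mem_Ioo.2 ⟨by linarith [hηpos s], by linarith [hηpos s]⟩)
  obtain ⟨S, hSsub, hSfin, hS⟩ :=
    (isCompact_Icc (a := a) (b := b)).elim_finite_subcover_image
      (fun s _ => isOpen_Ioo) hcov
  -- control points
  set pts : Set ℝ := insert a (insert b
    ((fun s => s - η s) '' S ∪ (fun s => s + η s) '' S)) with hptsdef
  have hptsfin : pts.Finite :=
    ((hSfin.image _).union (hSfin.image _)).insert b |>.insert a
  have hev : ∀ᶠ i in l, ∀ p ∈ pts, |G i p - F p| ≤ ε' := by
    rw [eventually_all_finite hptsfin]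
    intro p _
    have := (hpt p).eventually (Metric.closedBall_mem_nhds (F p) hε')
    refine this.mono fun i hi => ?_
    rw [Real.dist_eq] at hi
    exact hi
  filter_upwards [hev] with i hi
  have hpa : |G i a - F a| ≤ ε' := hi a (mem_insert _ _)
  have hpb : |G i b - F b| ≤ ε' := hi b (mem_insert_iff.2 (Or.inr (mem_insert _ _)))
  have hbd : ∀ t, |G i t - F t| ≤ 2*ε' := by
    intro t
    rcases lt_or_ge t a with hta | hta
    · have h1 : G i t ≤ G i a := hGm i hta.le
      have h2 : F t ≤ F a := hFm hta.le
      rw [abs_le] at hpa ⊢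
      exact ⟨by linarith [hG0 i t], by linarith [hF0' t]⟩
    · rcases le_or_gt t b with htb | htb
      · have := hS (mem_Icc.2 ⟨hta, htb⟩)
        rw [mem_iUnion₂] at this
        obtain ⟨s, hsS, hts⟩ := this
        have hp1 : |G i (s - η s) - F (s - η s)| ≤ ε' := hi _
          (mem_insert_iff.2 (Or.inr (mem_insert_iff.2 (Or.inr
            (mem_union_left _ ⟨s, hsS, rfl⟩)))))
        have hp2 : |G i (s + η s) - F (s + η s)| ≤ ε' := hi _
          (mem_insert_iff.2 (Or.inr (mem_insert_iff.2 (Or.inr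
            (mem_union_right _ ⟨s, hsS, rfl⟩)))))
        have hoscs := hηε s
        rw [mem_Ioo] at hts
        have g1 : G i (s - η s) ≤ G i t := hGm i hts.1.le
        have f1 : F t ≤ F (s + η s) := hFm hts.2.le
        have g2 : G i t ≤ G i (s + η s) := hGm i hts.2.le
        have f2 : F (s - η s) ≤ F t := hFm hts.1.le
        rw [abs_le] at hp1 hp2 ⊢
        exact ⟨by linarith [hp1.1], by linarith [hp2.2]⟩
      · have h1 : G i b ≤ G i t := hGm i htb.le
        have h2 : F b ≤ F t := hFm htb.le
        rw [abs_le] at hpb ⊢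
        exact ⟨by linarith [hF1' t], by linarith [hG1 i t]⟩
  have hbdd : BddAbove (range fun t => |G i t - F t|) := by
    refine ⟨2*ε', ?_⟩
    rintro x ⟨t, rfl⟩
    exact hbd t
  have hsup_le : (⨆ t, |G i t - F t|) ≤ 2*ε' := ciSup_le hbd
  have hsup_nonneg : 0 ≤ ⨆ t, |G i t - F t| :=
    le_trans (abs_nonneg _) (le_ciSup hbdd 0)
  rw [Real.dist_eq, sub_zero, abs_of_nonneg hsup_nonneg]
  linarith

lemma refl_inner (u x w : E) : ⟪reflMap u x, w⟫ = ⟪x, reflMap u w⟫ := by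
  simp only [reflMap, inner_sub_left, inner_sub_right, real_inner_smul_left,
    real_inner_smul_right]
  rw [real_inner_comm x u]
  ring

lemma refl_norm_one {u w : E} (hu : ‖u‖ = 1) (hw : ‖w‖ = 1) : reflMap u w ≠ 0 := by
  intro hzero
  have hu' : ⟪u, u⟫ = (1:ℝ) := by
    rw [real_inner_self_eq_norm_sq, hu]; norm_num
  have hw' : ⟪w, w⟫ = (1:ℝ) := by
    rw [real_inner_self_eq_norm_sq, hw]; norm_num
  have h : ⟪reflMap u w, reflMap u w⟫ = 1 := by
    simp only [reflMap, inner_sub_left, inner_sub_right, real_inner_smul_left,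
      real_inner_smul_right, hu', hw']
    rw [real_inner_comm w u]
    ring
  rw [hzero, inner_zero_left] at h
  norm_num at h

lemma measurableSet_inner_le (v : E) (t : ℝ) : MeasurableSet {x : E | ⟪x, v⟫ ≤ t} :=
  measurableSet_le ((continuous_id.inner continuous_const).measurable) measurable_const

noncomputable def cdfF (P : Measure (EuclideanSpace ℝ (Fin d))) (v : E) (t : ℝ) : ℝ :=
  (P {x | ⟪x, v⟫ ≤ t}).toReal

lemma cdfF_eq_map (P : Measure (EuclideanSpace ℝ (Fin d))) (v : E) (t : ℝ) :
    cdfF P v t = ((P.map (fun x => ⟪x, v⟫)) (Iic t)).toReal := by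
  have hm : Measurable (fun x : E => ⟪x, v⟫) :=
    (continuous_id.inner continuous_const).measurable
  rw [Measure.map_apply hm measurableSet_Iic]
  rfl

lemma cdfF_mono (P : Measure (EuclideanSpace ℝ (Fin d))) [IsProbabilityMeasure P] (v : E) :
    Monotone (cdfF P v) := fun s u hsu =>
  ENNReal.toReal_mono (measure_ne_top P _)
    (measure_mono (fun x hx => le_trans hx hsu))

lemma cdfF_nonneg (P : Measure (EuclideanSpace ℝ (Fin d))) (v : E) (t : ℝ) :
    0 ≤ cdfF P v t := ENNReal.toReal_nonneg

lemma cdfF_le_one (P : Measure (EuclideanSpace ℝ (Fin d))) [IsProbabilityMeasure P] (v : E)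
    (t : ℝ) : cdfF P v t ≤ 1 := by
  rw [cdfF]
  exact ENNReal.toReal_le_of_le_ofReal one_pos.le (by simpa using prob_le_one)

lemma cdfF_cont (P : Measure (EuclideanSpace ℝ (Fin d))) [IsProbabilityMeasure P]
    (habs : P ≪ (volume : Measure (EuclideanSpace ℝ (Fin d)))) {v : E} (hv : v ≠ 0) :
    Continuous (cdfF P v) := by
  have hm : Measurable (fun x : E => ⟪x, v⟫) :=
    (continuous_id.inner continuous_const).measurable
  have hatom : ∀ t : ℝ, (P.map fun x : E => ⟪x, v⟫) {t} = 0 := by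
    intro t
    rw [Measure.map_apply hm (measurableSet_singleton t)]
    exact habs (hyperplane_null v hv t)
  exact (cdf_cont _ hatom).congr fun t => (cdfF_eq_map P v t).symm

lemma cdfF_atBot (P : Measure (EuclideanSpace ℝ (Fin d))) [IsProbabilityMeasure P] (v : E) :
    Tendsto (cdfF P v) atBot (𝓝 0) := by
  have hm : Measurable (fun x : E => ⟪x, v⟫) :=
    (continuous_id.inner continuous_const).measurable
  have : IsProbabilityMeasure (P.map fun x : E => ⟪x, v⟫) :=
    Measure.isProbabilityMeasure_map hm.aemeasurable
  exact (cdf_atBot _).congr fun t => (cdfF_eq_map P v t).symm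

lemma cdfF_atTop (P : Measure (EuclideanSpace ℝ (Fin d))) [IsProbabilityMeasure P] (v : E) :
    Tendsto (cdfF P v) atTop (𝓝 1) := by
  have hm : Measurable (fun x : E => ⟪x, v⟫) :=
    (continuous_id.inner continuous_const).measurable
  have : IsProbabilityMeasure (P.map fun x : E => ⟪x, v⟫) :=
    Measure.isProbabilityMeasure_map hm.aemeasurable
  exact (cdf_atTop _).congr fun t => (cdfF_eq_map P v t).symm

lemma cdfF_tendsto_pt (P : Measure (EuclideanSpace ℝ (Fin d))) [IsProbabilityMeasure P]
    (habs : P ≪ (volume : Measure (EuclideanSpace ℝ (Fin d)))) {v : E} (hv : v ≠ 0) (t : ℝ) :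
    Tendsto (fun w => cdfF P w t) (𝓝 v) (𝓝 (cdfF P v t)) := by
  have hrepr : ∀ w : E,
      cdfF P w t = ∫ x, ({x : E | ⟪x, w⟫ ≤ t}).indicator (fun _ => (1:ℝ)) x ∂P := fun w =>
    (integral_indicator_one (measurableSet_inner_le w t)).symm
  simp only [hrepr]
  apply tendsto_integral_filter_of_dominated_convergence (bound := fun _ => (1:ℝ))
  · exact Eventually.of_forall fun w =>
      ((measurable_one.indicator (measurableSet_inner_le w t)).aestronglyMeasurable)
  · refine Eventually.of_forall fun w => Eventually.of_forall fun x => ?_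
    rw [Real.norm_eq_abs, Set.indicator_apply]
    split_ifs <;> simp
  · exact integrable_const 1
  · have hnull : P {x : E | ⟪x, v⟫ = t} = 0 := habs (hyperplane_null v hv t)
    have hae : ∀ᵐ x ∂P, ⟪x, v⟫ ≠ t := by
      rw [ae_iff]
      convert hnull using 2
      ext x
      simp
    filter_upwards [hae] with x hx
    have hc : Continuous fun w : E => ⟪x, w⟫ := continuous_const.inner continuous_id
    rcases lt_or_gt_of_ne hx with hlt | hgt
    · have hev : ∀ᶠ w in 𝓝 v, ⟪x, w⟫ < t := hc.continuousAt.eventually (gt_mem_nhds hlt)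
      have hval : ({x' : E | ⟪x', v⟫ ≤ t}).indicator (fun _ => (1:ℝ)) x = 1 :=
        Set.indicator_of_mem (s := {x' : E | ⟪x', v⟫ ≤ t}) (le_of_lt hlt) _
      rw [hval]
      exact Tendsto.congr'
        (hev.mono fun w hw =>
          (Set.indicator_of_mem (s := {x' : E | ⟪x', w⟫ ≤ t}) (le_of_lt hw) _).symm)
        tendsto_const_nhds
    · have hev : ∀ᶠ w in 𝓝 v, t < ⟪x, w⟫ := hc.continuousAt.eventually (lt_mem_nhds hgt)
      have hval : ({x' : E | ⟪x', v⟫ ≤ t}).indicator (fun _ => (1:ℝ)) x = 0 :=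
        Set.indicator_of_notMem (s := {x' : E | ⟪x', v⟫ ≤ t}) (not_le.2 hgt) _
      rw [hval]
      exact Tendsto.congr'
        (hev.mono fun w hw =>
          (Set.indicator_of_notMem (s := {x' : E | ⟪x', w⟫ ≤ t}) (not_le.2 hw) _).symm)
        tendsto_const_nhds

lemma abs_ciSup_sub (A B : ℝ → ℝ) (hA : ∀ t, |A t| ≤ 1) (hB : ∀ t, |B t| ≤ 1) :
    |(⨆ t, |A t|) - (⨆ t, |B t|)| ≤ ⨆ t, |A t - B t| := by
  have bddA : BddAbove (range fun t => |A t|) := ⟨1, by rintro x ⟨t, rfl⟩; exact hA t⟩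
  have bddB : BddAbove (range fun t => |B t|) := ⟨1, by rintro x ⟨t, rfl⟩; exact hB t⟩
  have bddD : BddAbove (range fun t => |A t - B t|) := by
    refine ⟨2, ?_⟩
    rintro x ⟨t, rfl⟩
    calc |A t - B t| ≤ |A t| + |B t| := abs_sub _ _
    _ ≤ 2 := by linarith [hA t, hB t]
  rw [abs_sub_le_iff]
  constructor
  · rw [sub_le_iff_le_add, add_comm]
    refine ciSup_le fun t => ?_
    calc |A t| ≤ |B t| + |A t - B t| := by
          have := abs_sub_abs_le_abs_sub (A t) (B t); linarith
    _ ≤ (⨆ t, |B t|) + ⨆ t, |A t - B t| :=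
      add_le_add (le_ciSup bddB t) (le_ciSup bddD t)
  · rw [sub_le_iff_le_add, add_comm]
    refine ciSup_le fun t => ?_
    calc |B t| ≤ |A t| + |A t - B t| := by
          have := abs_sub_abs_le_abs_sub (B t) (A t); rw [abs_sub_comm] at this; linarith
    _ ≤ (⨆ t, |A t|) + ⨆ t, |A t - B t| :=
      add_le_add (le_ciSup bddA t) (le_ciSup bddD t)


end Aux

set_option maxHeartbeats 1000000

/-- if `P` is absolutely continuous with respect to Lebesgue measure on `ℝ^d`,
then `g` is continuous on the unit sphere. -/
theorem popG_continuous {d k : ℕ}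
    (P : Measure (EuclideanSpace ℝ (Fin d))) [IsProbabilityMeasure P]
    (habs : P ≪ (volume : Measure (EuclideanSpace ℝ (Fin d))))
    (h : Fin k → EuclideanSpace ℝ (Fin d)) (hh : ∀ j, ‖h j‖ = 1) :
    ContinuousOn (popG P h) (Metric.sphere (0 : EuclideanSpace ℝ (Fin d)) 1) := by
  have hrw : ∀ u, popG P h u
      = (1 / (k : ℝ)) * ∑ j, ⨆ t : ℝ, |cdfF P (h j) t - cdfF P (reflMap u (h j)) t| := by
    intro u
    rw [popG]
    congr 1
    refine Finset.sum_congr rfl fun j _ => ?_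
    refine iSup_congr fun t => ?_
    have hset : {x : EuclideanSpace ℝ (Fin d) | ⟪reflMap u x, h j⟫ ≤ t}
        = {x : EuclideanSpace ℝ (Fin d) | ⟪x, reflMap u (h j)⟫ ≤ t} := by
      ext x
      simp only [Set.mem_setOf_eq, refl_inner]
    rw [hset]
    rfl
  refine ContinuousOn.congr ?_ (fun u _ => hrw u)
  refine ContinuousOn.mul continuousOn_const ?_
  refine continuousOn_finset_sum _ fun j _ => ?_
  intro u₀ hu₀
  have hu₀' : ‖u₀‖ = 1 := mem_sphere_zero_iff_norm.mp hu₀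
  have hv₀ : reflMap u₀ (h j) ≠ 0 := refl_norm_one hu₀' (hh j)
  have hcont : Continuous (fun u : EuclideanSpace ℝ (Fin d) => reflMap u (h j)) := by
    simp only [reflMap]
    exact ((continuous_const.mul (continuous_id.inner continuous_const :
      Continuous fun u : EuclideanSpace ℝ (Fin d) => ⟪u, h j⟫)).smul
      continuous_id).sub continuous_const
  have hΦ : ContinuousAt
      (fun v => ⨆ t : ℝ, |cdfF P (h j) t - cdfF P v t|) (reflMap u₀ (h j)) := by
    set v₀ := reflMap u₀ (h j) with hv₀def
    rw [ContinuousAt, tendsto_iff_dist_tendsto_zero]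
    have hK : Filter.Tendsto (fun w => ⨆ t : ℝ, |cdfF P v₀ t - cdfF P w t|)
        (nhds v₀) (nhds 0) := by
      have hpol := polya (cdfF_cont P habs hv₀) (cdfF_mono P v₀) (cdfF_atBot P v₀)
        (cdfF_atTop P v₀) (fun w => cdfF_mono P w) (fun w t => cdfF_nonneg P w t)
        (fun w t => cdfF_le_one P w t) (fun t => cdfF_tendsto_pt P habs hv₀ t)
      exact hpol.congr fun w => iSup_congr fun t => abs_sub_comm _ _
    refine tendsto_of_tendsto_of_tendsto_of_le_of_le tendsto_const_nhds hK
      (fun w => dist_nonneg) ?_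
    intro w
    dsimp only
    rw [Real.dist_eq]
    have hb : ∀ (v : EuclideanSpace ℝ (Fin d)) (t : ℝ),
        |cdfF P (h j) t - cdfF P v t| ≤ 1 := by
      intro v t
      rw [abs_le]
      constructor
      · linarith [cdfF_nonneg P (h j) t, cdfF_le_one P v t]
      · linarith [cdfF_le_one P (h j) t, cdfF_nonneg P v t]
    have hkey := abs_ciSup_sub (fun t => cdfF P (h j) t - cdfF P w t)
      (fun t => cdfF P (h j) t - cdfF P v₀ t) (hb w) (hb v₀)
    refine hkey.trans_eq (iSup_congr fun t => ?_)
    rw [show (cdfF P (h j) t - cdfF P w t) - (cdfF P (h j) t - cdfF P v₀ t)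
      = cdfF P v₀ t - cdfF P w t by ring]
  exact ContinuousAt.comp_continuousWithinAt (g := fun v => ⨆ t : ℝ, |cdfF P (h j) t - cdfF P v t|)
    (f := fun u : EuclideanSpace ℝ (Fin d) => reflMap u (h j)) hΦ hcont.continuousWithinAt
end
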